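/- If A is symmetric positive definite and u ≠ 0, then minimizing the error Φ(−wᵀu/√(wᵀAw)) over all w with wᵀu > 0 is achieved at w = A⁻¹u, and the minimum value is Φ(−√(uᵀA⁻¹u)). -/

import Mathlib

open MeasureTheory ProbabilityTheory Matrix

/-- The standard normal cumulative distribution function `Φ`. -/
noncomputable def stdGaussianCDF (x : ℝ) : ℝ :=
  (gaussianReal 0 1 (Set.Iic x)).toReal

lemma stdGaussianCDF_mono {x y : ℝ} (h : x ≤ y) : stdGaussianCDF x ≤ stdGaussianCDF y := by
  unfold stdGaussianCDF
  exact ENNReal.toReal_mono (measure_ne_top _ _) (measure_mono (Set.Iic_subset_Iic.2 h))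

/-- **Minimization of the Gaussian error criterion.** If `A` is symmetric positive
definite and `u ≠ 0`, then over all `w` with `wᵀu > 0`, the error
`Φ(−wᵀu/√(wᵀAw))` is minimized at `w = A⁻¹u`, with minimum value `Φ(−√(uᵀA⁻¹u))`. -/
theorem error_min_at_Ainv_u
    {K : ℕ} (A : Matrix (Fin K) (Fin K) ℝ) (hA : A.PosDef)
    (u : Fin K → ℝ) (hu : u ≠ 0) :
    (∀ w : Fin K → ℝ, 0 < w ⬝ᵥ u →
        stdGaussianCDF (-(Real.sqrt (u ⬝ᵥ A⁻¹ *ᵥ u))) ≤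
          stdGaussianCDF (-((w ⬝ᵥ u) / Real.sqrt (w ⬝ᵥ A *ᵥ w)))) ∧
      stdGaussianCDF
          (-(((A⁻¹ *ᵥ u) ⬝ᵥ u) / Real.sqrt ((A⁻¹ *ᵥ u) ⬝ᵥ A *ᵥ (A⁻¹ *ᵥ u)))) =
        stdGaussianCDF (-(Real.sqrt (u ⬝ᵥ A⁻¹ *ᵥ u))) := by
  have hdet : IsUnit A.det := (Matrix.isUnit_iff_isUnit_det A).1 hA.isUnit
  set v : Fin K → ℝ := A⁻¹ *ᵥ u with hv
  have hAv : A *ᵥ v = u := by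
    rw [hv, Matrix.mulVec_mulVec, Matrix.mul_nonsing_inv A hdet, Matrix.one_mulVec]
  have hAT : Aᵀ = A := by simpa using hA.isHermitian.eq
  have hAinvT : A⁻¹ᵀ = A⁻¹ := by
    rw [Matrix.transpose_nonsing_inv, hAT]
  -- u ⬝ᵥ A⁻¹ *ᵥ u = v ⬝ᵥ u
  have hc : u ⬝ᵥ A⁻¹ *ᵥ u = v ⬝ᵥ u := by
    rw [Matrix.dotProduct_mulVec, ← Matrix.mulVec_transpose, hAinvT]
  have hvAv : v ⬝ᵥ A *ᵥ v = v ⬝ᵥ u := by rw [hAv]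
  have hpos : ∀ x : Fin K → ℝ, x ≠ 0 → 0 < x ⬝ᵥ A *ᵥ x := by
    intro x hx
    simpa using hA.dotProduct_mulVec_pos hx
  have hposSemi : ∀ x : Fin K → ℝ, 0 ≤ x ⬝ᵥ A *ᵥ x := by
    intro x
    simpa using hA.posSemidef.dotProduct_mulVec_nonneg x
  have hvne : v ≠ 0 := by
    intro h
    apply hu
    rw [← hAv, h, Matrix.mulVec_zero]
  have hcpos : 0 < v ⬝ᵥ u := by
    have := hpos v hvne
    rwa [hvAv] at this
  -- Cauchy-Schwarz via discriminant
  have key : ∀ w : Fin K → ℝ, (w ⬝ᵥ u) ^ 2 ≤ (w ⬝ᵥ A *ᵥ w) * (v ⬝ᵥ u) := by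
    intro w
    have hwAv : w ⬝ᵥ A *ᵥ v = w ⬝ᵥ u := by rw [hAv]
    have hvAw : v ⬝ᵥ A *ᵥ w = w ⬝ᵥ u := by
      rw [Matrix.dotProduct_mulVec, ← Matrix.mulVec_transpose, hAT, hAv,
        dotProduct_comm]
    have hq : ∀ t : ℝ, 0 ≤ (w ⬝ᵥ A *ᵥ w) * (t * t) + (2 * (w ⬝ᵥ u)) * t + (v ⬝ᵥ u) := by
      intro t
      have h0 := hposSemi (t • w + v)
      have expand : (t • w + v) ⬝ᵥ A *ᵥ (t • w + v)
          = (w ⬝ᵥ A *ᵥ w) * (t * t) + (2 * (w ⬝ᵥ u)) * t + (v ⬝ᵥ u) := by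
        simp only [Matrix.mulVec_add, Matrix.mulVec_smul, add_dotProduct,
          smul_dotProduct, dotProduct_add, dotProduct_smul,
          hwAv, hvAw, hvAv, smul_eq_mul]
        ring
      rwa [expand] at h0
    have hd := discrim_le_zero hq
    rw [discrim] at hd
    nlinarith [hd]
  have main : ∀ w : Fin K → ℝ, 0 < w ⬝ᵥ u →
      (w ⬝ᵥ u) / Real.sqrt (w ⬝ᵥ A *ᵥ w) ≤ Real.sqrt (u ⬝ᵥ A⁻¹ *ᵥ u) := by
    intro w hw
    have hwne : w ≠ 0 := by
      intro h; rw [h, zero_dotProduct] at hw; exact lt_irrefl 0 hw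
    have hq : 0 < w ⬝ᵥ A *ᵥ w := hpos w hwne
    have hs : 0 < Real.sqrt (w ⬝ᵥ A *ᵥ w) := Real.sqrt_pos.2 hq
    rw [hc, Real.le_sqrt (by positivity) ]
    rw [div_pow, Real.sq_sqrt hq.le, div_le_iff₀ hq]
    calc (w ⬝ᵥ u) ^ 2 ≤ (w ⬝ᵥ A *ᵥ w) * (v ⬝ᵥ u) := key w
      _ = (v ⬝ᵥ u) * (w ⬝ᵥ A *ᵥ w) := by ring
    exact hcpos.le
  constructor
  · intro w hw
    exact stdGaussianCDF_mono (neg_le_neg (main w hw))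
  · have : v ⬝ᵥ u / Real.sqrt (v ⬝ᵥ A *ᵥ v) = Real.sqrt (u ⬝ᵥ A⁻¹ *ᵥ u) := by
      rw [hvAv, Real.div_sqrt, hc]
    rw [this]
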